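/- The generalized metacyclic 2-group H(2^a, 2^b; 2^c, 2^d+1) with d > 1 and max{d, a−d−1} < c < min{a, b} is a nonsplit extension of the cyclic group of order 2^a by the cyclic group of order 2^b; i.e., the subgroup generated by α is normal of order 2^a with cyclic quotient of order 2^b, and no complement to ⟨α⟩ exists. -/

import Mathlib

/-- Relators for the metacyclic presentation
`⟨α, β ∣ α^n = 1, β^m = α^t, β α β⁻¹ = α^r⟩` (generator `true ↦ α`, `false ↦ β`). -/
def metacyclicRels (n m t r : ℕ) : Set (FreeGroup Bool) :=
  {FreeGroup.of true ^ n,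
   FreeGroup.of false ^ m * (FreeGroup.of true ^ t)⁻¹,
   FreeGroup.of false * FreeGroup.of true * (FreeGroup.of false)⁻¹ *
     (FreeGroup.of true ^ r)⁻¹}

/-- The metacyclic group `H(n, m; t, r)`. -/
abbrev Metacyclic (n m t r : ℕ) := PresentedGroup (metacyclicRels n m t r)



lemma pow_two_pow_eq (d : ℕ) (hd : 2 ≤ d) (k : ℕ) :
    ∃ s : ℕ, Odd s ∧ (2^d+1)^(2^k) = 1 + 2^(d+k) * s := by
  induction k with
  | zero => exact ⟨1, odd_one, by ring⟩
  | succ k ih =>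
    obtain ⟨s, hs, h⟩ := ih
    obtain ⟨m, hm⟩ : ∃ m, d + k = m + 2 := ⟨d + k - 2, by omega⟩
    refine ⟨s + 2^(m+1) * s^2, ?_, ?_⟩
    · exact hs.add_even (Even.mul_right (Nat.even_pow.mpr ⟨even_two, by omega⟩) _)
    · have h2 : (2^d+1)^(2^(k+1)) = ((2^d+1)^(2^k))^2 := by
        rw [← pow_mul, pow_succ]
      have h3 : d + (k+1) = m + 3 := by omega
      rw [h2, h, hm, h3]
      ring

open Finset in
lemma geom_sum_two_pow (d b : ℕ) (hd : 2 ≤ d) :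
    ∃ s : ℕ, Odd s ∧ (∑ i ∈ range (2^b), (2^d+1)^i) = 2^b * s := by
  obtain ⟨s, hs, h⟩ := pow_two_pow_eq d hd b
  refine ⟨s, hs, ?_⟩
  have key : ((∑ i ∈ range (2^b), (2^d+1)^i : ℕ) : ℤ) * 2^d = ((2^b * s : ℕ) : ℤ) * 2^d := by
    push_cast
    have hg := geom_sum_mul ((2:ℤ)^d + 1) (2^b)
    simp only [add_sub_cancel_right] at hg
    rw [hg]
    have hc : ((2:ℤ)^d + 1)^(2^b) = 1 + 2^(d+b) * s := by exact_mod_cast congrArg (Nat.cast : ℕ → ℤ) h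
    rw [hc]; ring
  have := mul_right_cancel₀ (by positivity : ((2:ℤ)^d) ≠ 0) key
  exact_mod_cast this

def theta (q : ℕ) : (ZMod q)ˣ →* MulAut (Multiplicative (ZMod q)) where
  toFun v := AddEquiv.toMultiplicative (DistribMulAction.toAddAut _ _ v)
  map_one' := by ext x; simp
  map_mul' := by intro v w; ext x; simp [mul_smul]

lemma theta_apply (q : ℕ) (v : (ZMod q)ˣ) (x : ZMod q) :
    theta q v (Multiplicative.ofAdd x) = Multiplicative.ofAdd ((v : ZMod q) * x) := rfl

section
variable (a b c d : ℕ)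

lemma coprime_r (hd : 0 < d) : Nat.Coprime (2^d+1) (2^a) := by
  apply Nat.Coprime.pow_right
  have h : Even (2^d) := Nat.even_pow.mpr ⟨even_two, hd.ne'⟩
  exact (h.add_one).coprime_two_right

def uu (hd : 0 < d) : (ZMod (2^a))ˣ := ZMod.unitOfCoprime (2^d+1) (coprime_r a d hd)

lemma uu_coe (hd : 0 < d) : (uu a d hd : ZMod (2^a)) = (2^d+1 : ℕ) := rfl

lemma uu_pow_two_pow (hd : 0 < d) (e : ℕ) (he : a ≤ e) : (uu a d hd) ^ (2^e) = 1 := by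
  rcases Nat.eq_zero_or_pos a with ha | ha
  · subst ha
    haveI : Subsingleton (ZMod (2^0))ˣ := by
      rw [pow_zero]; infer_instance
    exact Subsingleton.elim _ _
  · haveI : NeZero (2^a) := ⟨by positivity⟩
    have h1 : orderOf (uu a d hd) ∣ Fintype.card (ZMod (2^a))ˣ := orderOf_dvd_card
    rw [ZMod.card_units_eq_totient] at h1
    have h3 : Nat.totient (2^a) ∣ 2^e := by
      rw [Nat.totient_prime_pow Nat.prime_two ha]
      have h4 : 2 ^ (a-1) * (2-1) = 2^(a-1) := by ring_nf
      rw [h4]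
      exact pow_dvd_pow 2 (by omega)
    exact orderOf_dvd_iff_pow_eq_one.mp (h1.trans h3)

lemma uu_pow_congr (hd : 0 < d) {m n : ℕ} (h : m ≡ n [MOD 2^(a+b)]) :
    (uu a d hd) ^ m = (uu a d hd) ^ n := by
  rw [pow_eq_pow_iff_modEq]
  exact h.of_dvd (orderOf_dvd_iff_pow_eq_one.mpr (uu_pow_two_pow a d hd (a+b) (by omega)))

instance instNZ (e : ℕ) : NeZero (2^e) := ⟨by positivity⟩

def chi (hd : 0 < d) : Multiplicative (ZMod (2^(a+b))) →* (ZMod (2^a))ˣ where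
  toFun k := (uu a d hd) ^ (k.toAdd).val
  map_one' := by
    show (uu a d hd) ^ (Multiplicative.toAdd (1 : Multiplicative (ZMod (2^(a+b))))).val = 1
    have h : (Multiplicative.toAdd (1 : Multiplicative (ZMod (2^(a+b))))).val = 0 := by
      simp [ZMod.val_zero]
    rw [h, pow_zero]
  map_mul' := by
    intro k l
    have hval : (k.toAdd + l.toAdd).val ≡ k.toAdd.val + l.toAdd.val [MOD 2^(a+b)] := by
      rw [ZMod.val_add]
      exact (Nat.mod_modEq _ _)
    calc (uu a d hd) ^ ((k*l).toAdd).val = (uu a d hd) ^ (k.toAdd.val + l.toAdd.val) :=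
          uu_pow_congr a b d hd hval
      _ = _ := pow_add _ _ _

def phi (hd : 0 < d) : Multiplicative (ZMod (2^(a+b))) →* MulAut (Multiplicative (ZMod (2^a))) :=
  (theta (2^a)).comp (chi a b d hd)

lemma phi_apply (hd : 0 < d) (k : ZMod (2^(a+b))) (x : ZMod (2^a)) :
    phi a b d hd (Multiplicative.ofAdd k) (Multiplicative.ofAdd x)
      = Multiplicative.ofAdd (((2^d+1 : ℕ) : ZMod (2^a)) ^ k.val * x) := by
  show theta (2^a) ((uu a d hd) ^ k.val) (Multiplicative.ofAdd x) = _
  rw [theta_apply, Units.val_pow_eq_pow_val, uu_coe]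

variable (hd : 0 < d)

abbrev SDg := SemidirectProduct (Multiplicative (ZMod (2^a))) (Multiplicative (ZMod (2^(a+b)))) (phi a b d hd)

/-- pair notation -/
def pair (x : ZMod (2^a)) (k : ZMod (2^(a+b))) : SDg a b d hd :=
  ⟨Multiplicative.ofAdd x, Multiplicative.ofAdd k⟩

lemma pair_mul (x y : ZMod (2^a)) (k l : ZMod (2^(a+b))) :
    pair a b d hd x k * pair a b d hd y l
      = pair a b d hd (x + ((2^d+1 : ℕ) : ZMod (2^a))^(k.val) * y) (k + l) := by
  unfold pair
  ext
  · show (Multiplicative.ofAdd x * (phi a b d hd (Multiplicative.ofAdd k) (Multiplicative.ofAdd y))) = _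
    rw [phi_apply]
    rfl
  · rfl

lemma pair_inj {x y : ZMod (2^a)} {k l : ZMod (2^(a+b))} 
    (h : pair a b d hd x k = pair a b d hd y l) : x = y ∧ k = l := by
  unfold pair at h
  refine ⟨?_, ?_⟩
  · have := congrArg SemidirectProduct.left h
    exact Multiplicative.ofAdd.injective this
  · have := congrArg SemidirectProduct.right h
    exact Multiplicative.ofAdd.injective this

lemma pair_one : pair a b d hd 0 0 = 1 := by
  unfold pair; ext <;> simp

lemma inl_eq_pair (x : ZMod (2^a)) :
    SemidirectProduct.inl (Multiplicative.ofAdd x) = pair a b d hd x 0 := by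
  unfold pair; ext <;> simp

lemma inr_eq_pair (k : ZMod (2^(a+b))) :
    SemidirectProduct.inr (Multiplicative.ofAdd k) = pair a b d hd 0 k := by
  unfold pair; ext <;> simp

def zz : SDg a b d hd := pair a b d hd (-((2^c : ℕ) : ZMod (2^a))) ((2^b : ℕ) : ZMod (2^(a+b)))

abbrev ZS : Subgroup (SDg a b d hd) := Subgroup.normalClosure {zz a b c d hd}

abbrev GG := SDg a b d hd ⧸ ZS a b c d hd

def mkG : SDg a b d hd →* GG a b c d hd := QuotientGroup.mk' _

lemma rr_mul_c (hcd : a ≤ c + d) :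
    ((2^d+1 : ℕ) : ZMod (2^a)) * ((2^c : ℕ) : ZMod (2^a)) = ((2^c : ℕ) : ZMod (2^a)) := by
  have h : ((2^(c+d) : ℕ) : ZMod (2^a)) = 0 :=
    (ZMod.natCast_eq_zero_iff _ _).mpr (pow_dvd_pow 2 hcd)
  have h2 : (2^d+1) * 2^c = 2^(c+d) + 2^c := by rw [pow_add]; ring
  rw [← Nat.cast_mul, h2, Nat.cast_add, h, zero_add]

lemma rr_fix (hcd : a ≤ c + d) (m : ℕ) (y : ZMod (2^a)) :
    ((2^d+1 : ℕ) : ZMod (2^a))^m * (((2^c : ℕ) : ZMod (2^a)) * y) = ((2^c : ℕ) : ZMod (2^a)) * y := by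
  induction m with
  | zero => rw [pow_zero, one_mul]
  | succ m ih =>
    rw [pow_succ, mul_comm (_^m), mul_assoc, ih, ← mul_assoc, rr_mul_c a c d hcd]

lemma rr_fix_neg (hcd : a ≤ c + d) (m : ℕ) (y : ZMod (2^a)) :
    ((2^d+1 : ℕ) : ZMod (2^a))^m * (-(((2^c : ℕ) : ZMod (2^a)) * y)) = -(((2^c : ℕ) : ZMod (2^a)) * y) := by
  rw [mul_neg, rr_fix a c d hcd]


lemma pair_inv (x : ZMod (2^a)) (k : ZMod (2^(a+b))) :
    (pair a b d hd x k)⁻¹ = pair a b d hd (-(((2^d+1 : ℕ) : ZMod (2^a))^((-k).val) * x)) (-k) := by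
  unfold pair
  ext
  · show (phi a b d hd (Multiplicative.ofAdd k)⁻¹) (Multiplicative.ofAdd x)⁻¹ = _
    rw [show (Multiplicative.ofAdd k)⁻¹ = Multiplicative.ofAdd (-k) from rfl,
        show (Multiplicative.ofAdd x)⁻¹ = Multiplicative.ofAdd (-x) from rfl,
        phi_apply]
    show Multiplicative.ofAdd _ = Multiplicative.ofAdd _
    congr 1
    ring
    exact rfl
  · rfl

lemma zz_zpow (hcd : a ≤ c + d) (n : ℤ) :
    (zz a b c d hd)^n
      = pair a b d hd ((n : ZMod (2^a)) * (-((2^c : ℕ) : ZMod (2^a))))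
          ((n : ZMod (2^(a+b))) * ((2^b : ℕ) : ZMod (2^(a+b)))) := by
  have hnat : ∀ m : ℕ, (zz a b c d hd)^m
      = pair a b d hd ((m : ZMod (2^a)) * (-((2^c : ℕ) : ZMod (2^a))))
          ((m : ZMod (2^(a+b))) * ((2^b : ℕ) : ZMod (2^(a+b)))) := by
    intro m
    induction m with
    | zero => rw [pow_zero, ← pair_one a b d hd]; push_cast; rw [zero_mul, zero_mul]
    | succ m ih =>
      rw [pow_succ, ih]
      unfold zz
      rw [pair_mul]
      have h1 : ((2^d+1 : ℕ) : ZMod (2^a))^(((m : ZMod (2^(a+b))) * ((2^b : ℕ) : ZMod (2^(a+b)))).val)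
            * (-((2^c : ℕ) : ZMod (2^a)))
          = -((2^c : ℕ) : ZMod (2^a)) := by
        simpa using rr_fix_neg a c d hcd (((m : ZMod (2^(a+b))) * ((2^b : ℕ) : ZMod (2^(a+b)))).val) 1
      rw [h1]
      congr 1 <;> push_cast <;> ring
  induction n using Int.induction_on with
  | zero => simpa using hnat 0
  | succ k _ =>
    have := hnat (k+1)
    rw [← zpow_natCast] at this
    rw [show ((k:ℤ)+1) = ((k+1 : ℕ) : ℤ) by push_cast; ring, this]
    congr 1 <;> push_cast <;> ring
  | pred k _ =>
    have h1 := hnat (k+1)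
    have h2 : (zz a b c d hd)^(-(k:ℤ)-1) = ((zz a b c d hd)^((k+1 : ℕ)))⁻¹ := by
      rw [← zpow_natCast, ← zpow_neg]
      congr 1
      push_cast; ring
    rw [h2, h1, pair_inv]
    have h3 : ((2^d+1 : ℕ) : ZMod (2^a))^((-(((k+1:ℕ) : ZMod (2^(a+b))) * ((2^b : ℕ) : ZMod (2^(a+b))))).val)
            * ((((k+1:ℕ)) : ZMod (2^a)) * (-((2^c : ℕ) : ZMod (2^a))))
        = (((k+1:ℕ)) : ZMod (2^a)) * (-((2^c : ℕ) : ZMod (2^a))) := by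
      have := rr_fix_neg a c d hcd ((-(((k+1:ℕ) : ZMod (2^(a+b))) * ((2^b : ℕ) : ZMod (2^(a+b))))).val)
          (((k+1:ℕ)) : ZMod (2^a))
      calc _ = ((2^d+1 : ℕ) : ZMod (2^a))^_ * (-(((2^c : ℕ) : ZMod (2^a)) * (((k+1:ℕ)) : ZMod (2^a)))) := by ring
        _ = -(((2^c : ℕ) : ZMod (2^a)) * (((k+1:ℕ)) : ZMod (2^a))) := this
        _ = _ := by ring
    rw [h3]
    congr 1 <;> push_cast <;> ring

include hd in
lemma rr_pow_val (k : ℕ) :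
    ((2^d+1:ℕ) : ZMod (2^a)) ^ (((k : ℕ) : ZMod (2^(a+b))).val) = ((2^d+1:ℕ) : ZMod (2^a)) ^ k := by
  have hu : ∀ m : ℕ, ((2^d+1:ℕ) : ZMod (2^a))^m = ((uu a d hd ^ m : (ZMod (2^a))ˣ) : ZMod (2^a)) := by
    intro m; rw [Units.val_pow_eq_pow_val, uu_coe]
  rw [hu, hu]
  exact congrArg Units.val (uu_pow_congr a b d hd (by rw [ZMod.val_natCast]; exact Nat.mod_modEq _ _))

lemma rr_pow_two_b (hd2 : 2 ≤ d) (hbd : a ≤ b + d) :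
    ((2^d+1 : ℕ) : ZMod (2^a))^(2^b) = 1 := by
  obtain ⟨s, -, hs⟩ := pow_two_pow_eq d hd2 b
  have h0 : ((2^(d+b) : ℕ) : ZMod (2^a)) = 0 :=
    (ZMod.natCast_eq_zero_iff _ _).mpr (pow_dvd_pow 2 (by omega))
  rw [← Nat.cast_pow, hs]
  push_cast
  push_cast at h0
  rw [h0]
  ring

lemma zz_central (hd2 : 2 ≤ d) (hbd : a ≤ b + d) (hcd : a ≤ c + d) (g : SDg a b d hd) :
    g * zz a b c d hd = zz a b c d hd * g := by
  have hg : g = pair a b d hd g.left.toAdd g.right.toAdd := rfl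
  rw [hg]
  unfold zz
  rw [pair_mul, pair_mul]
  have h1 : ((2^d+1 : ℕ) : ZMod (2^a))^((g.right.toAdd).val) * (-((2^c : ℕ) : ZMod (2^a)))
      = -((2^c : ℕ) : ZMod (2^a)) := by
    simpa using rr_fix_neg a c d hcd (g.right.toAdd).val 1
  have h2 : ((2^d+1 : ℕ) : ZMod (2^a))^((((2^b:ℕ) : ZMod (2^(a+b)))).val) * g.left.toAdd
      = g.left.toAdd := by
    rw [rr_pow_val a b d hd, rr_pow_two_b a b d hd2 hbd, one_mul]
  rw [h1, h2]
  congr 1 <;> ring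

lemma ZS_eq (hd2 : 2 ≤ d) (hbd : a ≤ b + d) (hcd : a ≤ c + d) :
    ZS a b c d hd = Subgroup.zpowers (zz a b c d hd) := by
  apply le_antisymm
  · haveI : (Subgroup.zpowers (zz a b c d hd)).Normal := by
      constructor
      intro x hx g
      obtain ⟨n, rfl⟩ := Subgroup.mem_zpowers_iff.mp hx
      have hc : Commute g (zz a b c d hd) := zz_central a b c d hd hd2 hbd hcd g
      have := (hc.zpow_right n).eq
      rw [this, mul_assoc, mul_inv_cancel, mul_one]
      exact Subgroup.mem_zpowers_iff.mpr ⟨n, rfl⟩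
    exact Subgroup.normalClosure_le_normal (by simp [Subgroup.mem_zpowers])
  · exact Subgroup.zpowers_le.mpr (Subgroup.subset_normalClosure (Set.mem_singleton _))

lemma mem_ZS (hd2 : 2 ≤ d) (hbd : a ≤ b + d) (hcd : a ≤ c + d) {w : SDg a b d hd}
    (hw : w ∈ ZS a b c d hd) :
    ∃ n : ℤ, w = pair a b d hd ((n : ZMod (2^a)) * (-((2^c : ℕ) : ZMod (2^a))))
          ((n : ZMod (2^(a+b))) * ((2^b : ℕ) : ZMod (2^(a+b)))) := by
  rw [ZS_eq a b c d hd hd2 hbd hcd] at hw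
  obtain ⟨n, rfl⟩ := Subgroup.mem_zpowers_iff.mp hw
  exact ⟨n, zz_zpow a b c d hd hcd n⟩

lemma snd_cast (n : ℤ) (m : ℕ) :
    (n : ZMod (2^(a+b))) * ((m : ℕ) : ZMod (2^(a+b))) = ((n * m : ℤ) : ZMod (2^(a+b))) := by
  push_cast; ring

lemma F1 (hca : c < a) {x : ZMod (2^a)}
    (hx : pair a b d hd x 0 ∈ ZS a b c d hd) (hd2 : 2 ≤ d) (hbd : a ≤ b + d) (hcd : a ≤ c + d) :
    x = 0 := by
  obtain ⟨n, hn⟩ := mem_ZS a b c d hd hd2 hbd hcd hx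
  obtain ⟨h1, h2⟩ := pair_inj a b d hd hn
  rw [snd_cast] at h2
  have hdvd : ((2:ℤ)^(a+b)) ∣ n * 2^b := by
    have h0 : ((n * 2^b : ℤ) : ZMod (2^(a+b))) = 0 := by
      push_cast
      push_cast at h2
      linear_combination -h2
    have := (ZMod.intCast_zmod_eq_zero_iff_dvd (n * 2^b) (2^(a+b))).mp h0
    exact_mod_cast this
  have h2a : (2:ℤ)^a ∣ n := by
    have hne : ((2:ℤ)^b) ≠ 0 := by positivity
    rw [pow_add] at hdvd
    exact (mul_dvd_mul_iff_right hne).mp hdvd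
  rw [h1]
  have : (n : ZMod (2^a)) * (-((2^c : ℕ) : ZMod (2^a))) = ((-(n * 2^c) : ℤ) : ZMod (2^a)) := by
    push_cast; ring
  rw [this, ZMod.intCast_zmod_eq_zero_iff_dvd]
  have : (2:ℤ)^a ∣ -(n * 2^c) := dvd_neg.mpr (h2a.mul_right _)
  exact_mod_cast this

lemma F2 (hb : 0 < b) (ha : 0 < a) (x : ZMod (2^a)) (hd2 : 2 ≤ d) (hbd : a ≤ b + d) (hcd : a ≤ c + d) :
    pair a b d hd x ((2^(b-1) : ℕ) : ZMod (2^(a+b))) ∉ ZS a b c d hd := by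
  intro hx
  obtain ⟨n, hn⟩ := mem_ZS a b c d hd hd2 hbd hcd hx
  obtain ⟨-, h2⟩ := pair_inj a b d hd hn
  rw [snd_cast] at h2
  have hdvd : ((2:ℤ)^(a+b)) ∣ n * 2^b - 2^(b-1) := by
    have h0 : ((n * 2^b - 2^(b-1) : ℤ) : ZMod (2^(a+b))) = 0 := by
      push_cast
      push_cast at h2
      linear_combination -h2
    have := (ZMod.intCast_zmod_eq_zero_iff_dvd _ (2^(a+b))).mp h0
    exact_mod_cast this
  obtain ⟨b', rfl⟩ : ∃ b', b = b' + 1 := ⟨b - 1, by omega⟩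
  have hfact : n * 2^(b'+1) - 2^(b'+1-1) = 2^b' * (2*n - 1) := by
    rw [pow_succ]
    simp
    ring
  rw [hfact] at hdvd
  have h2a : (2:ℤ)^(a+1) ∣ 2*n - 1 := by
    have hne : ((2:ℤ)^b') ≠ 0 := by positivity
    have : (2:ℤ)^(a + (b'+1)) = 2^b' * 2^(a+1) := by rw [← pow_add]; ring_nf
    rw [this] at hdvd
    exact (mul_dvd_mul_iff_left hne).mp hdvd
  have : (2:ℤ) ∣ 2*n - 1 := dvd_trans (dvd_pow_self 2 (by omega)) h2a
  omega

lemma F3 (hca : c < a) {x : ZMod (2^a)}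
    (hx : pair a b d hd x ((2^b : ℕ) : ZMod (2^(a+b))) ∈ ZS a b c d hd)
    (hd2 : 2 ≤ d) (hbd : a ≤ b + d) (hcd : a ≤ c + d) :
    x = -((2^c : ℕ) : ZMod (2^a)) := by
  obtain ⟨n, hn⟩ := mem_ZS a b c d hd hd2 hbd hcd hx
  obtain ⟨h1, h2⟩ := pair_inj a b d hd hn
  rw [snd_cast] at h2
  have hdvd : ((2:ℤ)^(a+b)) ∣ (n - 1) * 2^b := by
    have h0 : (((n-1) * 2^b : ℤ) : ZMod (2^(a+b))) = 0 := by
      push_cast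
      push_cast at h2
      linear_combination -h2
    have := (ZMod.intCast_zmod_eq_zero_iff_dvd _ (2^(a+b))).mp h0
    exact_mod_cast this
  have h2a : (2:ℤ)^a ∣ n - 1 := by
    have hne : ((2:ℤ)^b) ≠ 0 := by positivity
    rw [pow_add] at hdvd
    exact (mul_dvd_mul_iff_right hne).mp hdvd
  have key : x - (-((2^c : ℕ) : ZMod (2^a))) = ((-(n-1) * 2^c : ℤ) : ZMod (2^a)) := by
    rw [h1]; push_cast; ring
  have : ((-(n-1) * 2^c : ℤ) : ZMod (2^a)) = 0 := by
    rw [ZMod.intCast_zmod_eq_zero_iff_dvd]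
    have : (2:ℤ)^a ∣ -(n-1) * 2^c := by
      rw [neg_mul]
      exact dvd_neg.mpr (h2a.mul_right _)
    exact_mod_cast this
  rw [this] at key
  exact sub_eq_zero.mp key

include hd in
open Finset in
lemma pair_m_one_pow (m : ZMod (2^a)) (N : ℕ) :
    (pair a b d hd m ((1:ℕ) : ZMod (2^(a+b))))^N
      = pair a b d hd (m * ((∑ i ∈ range N, (2^d+1)^i : ℕ) : ZMod (2^a)))
          ((N : ℕ) : ZMod (2^(a+b))) := by
  induction N with
  | zero =>
    rw [pow_zero, ← pair_one a b d hd]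
    congr 1 <;> push_cast <;> ring
  | succ N ih =>
    rw [pow_succ, ih, pair_mul, rr_pow_val a b d hd]
    congr 1
    · rw [sum_range_succ]
      push_cast
      ring
    · push_cast
      ring

lemma pair_x0_zpow (x : ZMod (2^a)) (j : ℤ) :
    (pair a b d hd x 0)^j = pair a b d hd ((j : ZMod (2^a)) * x) 0 := by
  rw [← inl_eq_pair, ← map_zpow, ← inl_eq_pair]
  congr 1
  rw [← ofAdd_zsmul]
  congr 1
  rw [zsmul_eq_mul]

lemma pair_x0_pow (x : ZMod (2^a)) (j : ℕ) :
    (pair a b d hd x 0)^j = pair a b d hd ((j : ZMod (2^a)) * x) 0 := by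
  have := pair_x0_zpow a b d hd x (j : ℤ)
  rw [zpow_natCast] at this
  rw [this]
  norm_cast

lemma pair_0k_pow (k : ZMod (2^(a+b))) (j : ℕ) :
    (pair a b d hd 0 k)^j = pair a b d hd 0 ((j : ZMod (2^(a+b))) * k) := by
  rw [← inr_eq_pair, ← map_pow, ← inr_eq_pair]
  congr 1
  rw [← ofAdd_nsmul]
  congr 1
  rw [nsmul_eq_mul]

-- relations in GG
lemma relA : (mkG a b c d hd (pair a b d hd 1 0))^(2^a) = 1 := by
  rw [← map_pow, pair_x0_pow]
  have h1 : ((2^a : ℕ) : ZMod (2^a)) * 1 = 0 := by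
    rw [ZMod.natCast_self, zero_mul]
  rw [h1, pair_one, map_one]

lemma mkG_zz : mkG a b c d hd (zz a b c d hd) = 1 :=
  (QuotientGroup.eq_one_iff _).mpr (Subgroup.subset_normalClosure rfl)

lemma relB (ha : 0 < a) :
    (mkG a b c d hd (pair a b d hd 0 1))^(2^b) = (mkG a b c d hd (pair a b d hd 1 0))^(2^c) := by
  rw [← map_pow, ← map_pow, pair_x0_pow, pair_0k_pow, mul_one, mul_one]
  have key : pair a b d hd 0 ((2^b : ℕ) : ZMod (2^(a+b)))
      = pair a b d hd ((2^c : ℕ) : ZMod (2^a)) 0 * zz a b c d hd := by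
    unfold zz
    rw [pair_mul]
    congr 1
    · rw [ZMod.val_zero, pow_zero, one_mul, add_neg_cancel]
    · rw [zero_add]
  rw [key, map_mul, mkG_zz, mul_one]

lemma relC (ha : 0 < a) :
    mkG a b c d hd (pair a b d hd 0 1) * mkG a b c d hd (pair a b d hd 1 0)
      * (mkG a b c d hd (pair a b d hd 0 1))⁻¹
    = (mkG a b c d hd (pair a b d hd 1 0))^(2^d+1) := by
  haveI : Fact (1 < 2^(a+b)) := ⟨by
    have : 2^1 ≤ 2^(a+b) := Nat.pow_le_pow_right (by norm_num) (by omega)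
    omega⟩
  rw [← map_inv, ← map_mul, ← map_mul, ← map_pow, pair_x0_pow, mul_one]
  congr 1
  have hinv : (pair a b d hd 0 1)⁻¹ = pair a b d hd 0 (-1) := by
    rw [pair_inv]
    congr 1
    rw [mul_zero, neg_zero]
  rw [hinv, pair_mul, pair_mul]
  have hval : ((1 : ZMod (2^(a+b)))).val = 1 := ZMod.val_one _
  congr 1
  · rw [hval, pow_one, zero_add, mul_one, mul_zero, add_zero]
  · ring

lemma pair_x0_inv (x : ZMod (2^a)) : (pair a b d hd x 0)⁻¹ = pair a b d hd (-x) 0 := by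
  rw [pair_inv]
  congr 1
  · rw [neg_zero, ZMod.val_zero, pow_zero, one_mul]
  · rw [neg_zero]

lemma pair_x0_mul_0k (x : ZMod (2^a)) (k : ZMod (2^(a+b))) :
    pair a b d hd x 0 * pair a b d hd 0 k = pair a b d hd x k := by
  rw [pair_mul]
  congr 1
  · rw [mul_zero, add_zero]
  · rw [zero_add]

lemma mkG_eq_iff (w1 w2 : SDg a b d hd) :
    mkG a b c d hd w1 = mkG a b c d hd w2 ↔ ∃ z ∈ ZS a b c d hd, w1 * z = w2 := by
  unfold mkG
  exact QuotientGroup.mk'_eq_mk' (ZS a b c d hd)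
end

set_option maxHeartbeats 1000000 in
/-- `H(2^a, 2^b; 2^c, 2^d + 1)` with `d > 1` and `max{d, a-d-1} < c < min{a, b}` is a
nonsplit extension of `ℤ/2^a` by `ℤ/2^b`: the subgroup `⟨α⟩` is normal of order `2^a`,
the quotient is cyclic of order `2^b`, and `⟨α⟩` has no complement. -/
theorem typeI_nonsplit (a b c d : ℕ) (hd : 1 < d) (hdc : d < c) (hac : a - d - 1 < c)
    (hca : c < a) (hcb : c < b) :
    letI H := Metacyclic (2 ^ a) (2 ^ b) (2 ^ c) (2 ^ d + 1)
    letI α : H := PresentedGroup.of true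
    letI A : Subgroup H := Subgroup.zpowers α
    A.Normal ∧ Nat.card A = 2 ^ a ∧
      (∀ _ : A.Normal, IsCyclic (H ⧸ A) ∧ Nat.card (H ⧸ A) = 2 ^ b) ∧
      ¬ ∃ K : Subgroup H, A.IsComplement' K := by
  have hd0 : 0 < d := by omega
  have hd2 : 2 ≤ d := hd
  have ha : 0 < a := by omega
  have hb : 0 < b := by omega
  have hcd : a ≤ c + d := by omega
  have hbd : a ≤ b + d := by omega
  set H := Metacyclic (2 ^ a) (2 ^ b) (2 ^ c) (2 ^ d + 1) with hH
  set α : H := PresentedGroup.of true with hα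
  set β : H := PresentedGroup.of false with hβ
  set A : Subgroup H := Subgroup.zpowers α with hA
  set rels := metacyclicRels (2^a) (2^b) (2^c) (2^d+1) with hrels
  -- relations in H
  have hrelone : ∀ r ∈ rels, PresentedGroup.mk rels r = 1 := fun r hr =>
    (QuotientGroup.eq_one_iff r).mpr (Subgroup.subset_normalClosure hr)
  have relα : α ^ (2^a) = 1 := by
    have := hrelone _ (Set.mem_insert _ _)
    rwa [map_pow] at this
  have relβ : β ^ (2^b) = α ^ (2^c) := by
    have := hrelone _ (Set.mem_insert_of_mem _ (Set.mem_insert _ _))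
    rw [map_mul, map_inv, map_pow, map_pow] at this
    exact mul_inv_eq_one.mp this
  have relc : β * α * β⁻¹ = α ^ (2^d+1) := by
    have := hrelone _ (Set.mem_insert_of_mem _ (Set.mem_insert_of_mem _ rfl))
    rw [map_mul, map_inv, map_mul, map_inv, map_mul, map_pow] at this
    exact mul_inv_eq_one.mp this
  -- the concrete model homomorphism
  set F : Bool → GG a b c d hd0 := fun t =>
    if t then mkG a b c d hd0 (pair a b d hd0 1 0) else mkG a b c d hd0 (pair a b d hd0 0 1)
    with hF
  have hFrels : ∀ r ∈ rels, FreeGroup.lift F r = 1 := by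
    intro r hr
    have hFt : F true = mkG a b c d hd0 (pair a b d hd0 1 0) := rfl
    have hFf : F false = mkG a b c d hd0 (pair a b d hd0 0 1) := rfl
    simp only [hrels, metacyclicRels, Set.mem_insert_iff, Set.mem_singleton_iff] at hr
    rcases hr with rfl | rfl | rfl
    · rw [map_pow, FreeGroup.lift_apply_of, hFt]
      exact relA a b c d hd0
    · rw [map_mul, map_inv, map_pow, map_pow, FreeGroup.lift_apply_of, FreeGroup.lift_apply_of, hFt, hFf,
        mul_inv_eq_one]
      exact relB a b c d hd0 ha
    · rw [map_mul, map_inv, map_mul, map_inv, map_mul, map_pow, FreeGroup.lift_apply_of,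
        FreeGroup.lift_apply_of, hFt, hFf, mul_inv_eq_one]
      exact relC a b c d hd0 ha
  set Pi : H →* GG a b c d hd0 := PresentedGroup.toGroup hFrels with hPi
  have Piα : Pi α = mkG a b c d hd0 (pair a b d hd0 1 0) := PresentedGroup.toGroup.of hFrels
  have Piβ : Pi β = mkG a b c d hd0 (pair a b d hd0 0 1) := PresentedGroup.toGroup.of hFrels
  -- order of α
  have hordα : orderOf α = 2^a := by
    have h1 : orderOf α ∣ 2^a := orderOf_dvd_of_pow_eq_one relα
    obtain ⟨t, ht, hord⟩ := (Nat.dvd_prime_pow Nat.prime_two).mp h1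
    have hta : t = a := by
      by_contra hne
      have hpow : α ^ (2^(a-1)) = 1 := by
        apply orderOf_dvd_iff_pow_eq_one.mp
        rw [hord]
        exact pow_dvd_pow 2 (by omega)
      have h2 : Pi (α ^ (2^(a-1))) = 1 := by rw [hpow, map_one]
      rw [map_pow, Piα, ← map_pow, pair_x0_pow, mul_one] at h2
      have hmem : pair a b d hd0 ((2^(a-1) : ℕ) : ZMod (2^a)) 0 ∈ ZS a b c d hd0 :=
        (QuotientGroup.eq_one_iff _).mp h2
      have hx := F1 a b c d hd0 hca hmem hd2 hbd hcd
      rw [ZMod.natCast_eq_zero_iff] at hx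
      have hlt : (2:ℕ)^(a-1) < 2^a := Nat.pow_lt_pow_right (by norm_num) (by omega)
      have := Nat.le_of_dvd (by positivity) hx
      omega
    rw [hord, hta]
  have hcardA : Nat.card A = 2^a := by rw [hA, Nat.card_zpowers]; exact hordα
  -- inverse exponent
  obtain ⟨r', kk, hrr'⟩ : ∃ r' kk, (2^d+1) * r' = 1 + 2^a * kk := by
    haveI : NeZero (2^a) := ⟨by positivity⟩
    set v := (uu a d hd0)⁻¹ with hv
    refine ⟨(v : ZMod (2^a)).val, ?_⟩
    have hcast : (((2^d+1) * (v : ZMod (2^a)).val : ℕ) : ZMod (2^a)) = ((1 : ℕ) : ZMod (2^a)) := by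
      push_cast
      rw [ZMod.natCast_val, ZMod.cast_id]
      have : ((2^d+1 : ℕ) : ZMod (2^a)) = ((uu a d hd0 : (ZMod (2^a))ˣ) : ZMod (2^a)) := rfl
      push_cast at this
      rw [this, hv, ← Units.val_mul, mul_inv_cancel, Units.val_one]
    rw [ZMod.natCast_eq_natCast_iff] at hcast
    have hmod := hcast.symm
    unfold Nat.ModEq at hmod
    have h2a : 1 < 2^a := by
      have : 2^1 ≤ 2^a := Nat.pow_le_pow_right (by norm_num) (by omega)
      omega
    rw [Nat.mod_eq_of_lt h2a] at hmod
    have h1le : 1 ≤ (2^d+1) * (v : ZMod (2^a)).val := by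
      rcases Nat.eq_zero_or_pos ((2^d+1) * (v : ZMod (2^a)).val) with h0 | h0
      · exfalso; rw [h0] at hmod; simp at hmod
      · omega
    have hdvd : 2^a ∣ (2^d+1) * (v : ZMod (2^a)).val - 1 :=
      (Nat.modEq_iff_dvd' h1le).mp hcast.symm
    obtain ⟨kk, hkk⟩ := hdvd
    refine ⟨kk, by omega⟩
  have hβαβ : β⁻¹ * α * β = α ^ r' := by
    have hwr : (β⁻¹ * α * β) ^ (2^d+1) = α := by
      have h1 : (β⁻¹ * α * β⁻¹⁻¹) ^ (2^d+1) = β⁻¹ * α ^ (2^d+1) * β⁻¹⁻¹ := conj_pow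
      rw [inv_inv] at h1
      rw [h1, ← relc]
      group
    have hw2a : (β⁻¹ * α * β) ^ (2^a) = 1 := by
      have h1 : (β⁻¹ * α * β⁻¹⁻¹) ^ (2^a) = β⁻¹ * α ^ (2^a) * β⁻¹⁻¹ := conj_pow
      rw [inv_inv] at h1
      rw [h1, relα]
      group
    calc β⁻¹ * α * β = (β⁻¹ * α * β) ^ ((2^d+1) * r') := by
          rw [hrr', pow_add, pow_one, pow_mul, hw2a, one_pow, mul_one]
      _ = ((β⁻¹ * α * β) ^ (2^d+1)) ^ r' := by rw [pow_mul]
      _ = α ^ r' := by rw [hwr]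
  have claim : ∀ g : H, g * α * g⁻¹ ∈ A ∧ g⁻¹ * α * g ∈ A := by
    intro g
    have hg : g ∈ Subgroup.closure (Set.range (PresentedGroup.of : Bool → H)) := by
      rw [PresentedGroup.closure_range_of]
      trivial
    induction hg using Subgroup.closure_induction with
    | mem x hx =>
      obtain ⟨t, rfl⟩ := hx
      cases t
      · -- of false = β
        constructor
        · show β * α * β⁻¹ ∈ A
          rw [relc]
          exact Subgroup.pow_mem _ (Subgroup.mem_zpowers α) _
        · show β⁻¹ * α * β ∈ A
          rw [hβαβ]
          exact Subgroup.pow_mem _ (Subgroup.mem_zpowers α) _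
      · -- of true = α
        constructor
        · show α * α * α⁻¹ ∈ A
          have : α * α * α⁻¹ = α := by group
          rw [this]; exact Subgroup.mem_zpowers α
        · show α⁻¹ * α * α ∈ A
          have : α⁻¹ * α * α = α := by group
          rw [this]; exact Subgroup.mem_zpowers α
    | one =>
      refine ⟨?_, ?_⟩
      · have h : (1:H) * α * 1⁻¹ = α := by group
        rw [h]; exact Subgroup.mem_zpowers α
      · have h : (1:H)⁻¹ * α * 1 = α := by group
        rw [h]; exact Subgroup.mem_zpowers α
    | mul x y hx hy ihx ihy =>
      obtain ⟨m, hm⟩ := Subgroup.mem_zpowers_iff.mp ihy.1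
      obtain ⟨m', hm'⟩ := Subgroup.mem_zpowers_iff.mp ihx.2
      constructor
      · have : (x*y) * α * (x*y)⁻¹ = x * (y * α * y⁻¹) * x⁻¹ := by group
        rw [this, ← hm, ← conj_zpow]
        exact Subgroup.zpow_mem _ ihx.1 m
      · have : (x*y)⁻¹ * α * (x*y) = y⁻¹ * (x⁻¹ * α * x) * y := by group
        rw [this, ← hm']
        have h2 : y⁻¹ * α ^ m' * y = (y⁻¹ * α * y⁻¹⁻¹) ^ m' := by rw [conj_zpow, inv_inv]
        rw [h2, inv_inv]
        exact Subgroup.zpow_mem _ ihy.2 m'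
    | inv x hx ihx =>
      refine ⟨by simpa using ihx.2, by simpa using ihx.1⟩
  have hNormal : A.Normal := by
    constructor
    intro x hx g
    obtain ⟨m, rfl⟩ := Subgroup.mem_zpowers_iff.mp hx
    have : g * α ^ m * g⁻¹ = (g * α * g⁻¹) ^ m := by rw [conj_zpow]
    rw [this]
    exact Subgroup.zpow_mem _ (claim g).1 m
  -- quotient part
  have hquot : ∀ _ : A.Normal, IsCyclic (H ⧸ A) ∧ Nat.card (H ⧸ A) = 2^b := by
    intro inst
    haveI := inst
    set q : H →* H ⧸ A := QuotientGroup.mk' A with hq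
    have htop : ∀ x : H ⧸ A, x ∈ Subgroup.zpowers (q β) := by
      intro x
      refine QuotientGroup.induction_on x ?_
      intro h
      have hg : h ∈ Subgroup.closure (Set.range (PresentedGroup.of : Bool → H)) := by
        rw [PresentedGroup.closure_range_of]
        trivial
      induction hg using Subgroup.closure_induction with
      | mem y hy =>
        obtain ⟨t, rfl⟩ := hy
        cases t
        · exact Subgroup.mem_zpowers _
        · show q α ∈ _
          have h1 : q α = 1 := (QuotientGroup.eq_one_iff _).mpr (Subgroup.mem_zpowers α)
          rw [h1]
          exact one_mem _
      | one =>
        show q 1 ∈ _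
        rw [map_one]
        exact one_mem _
      | mul x y hx hy ihx ihy =>
        show q (x * y) ∈ _
        rw [map_mul]
        exact mul_mem ihx ihy
      | inv x hx ihx =>
        show q x⁻¹ ∈ _
        rw [map_inv]
        exact inv_mem ihx
    have hdvdb : (q β) ^ (2^b) = 1 := by
      rw [← map_pow, relβ]
      exact (QuotientGroup.eq_one_iff _).mpr (Subgroup.pow_mem _ (Subgroup.mem_zpowers α) _)
    have hne : (q β) ^ (2^(b-1)) ≠ 1 := by
      intro h1
      rw [← map_pow] at h1
      have hmem : β ^ (2^(b-1)) ∈ A := (QuotientGroup.eq_one_iff _).mp h1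
      obtain ⟨j, hj⟩ := Subgroup.mem_zpowers_iff.mp hmem
      have h2 := congrArg Pi hj
      rw [map_zpow, map_pow, Piα, Piβ, ← map_zpow, ← map_pow, pair_x0_zpow, pair_0k_pow,
        mul_one, mul_one] at h2
      rw [mkG_eq_iff a b c d hd0] at h2
      obtain ⟨z, hz, hzeq⟩ := h2
      have hzval : z = pair a b d hd0 (-(↑j : ZMod (2^a))) 0
          * pair a b d hd0 0 (((2^(b-1) : ℕ)) : ZMod (2^(a+b))) := by
        rw [← pair_x0_inv]
        rw [← hzeq]
        group
      rw [hzval, pair_x0_mul_0k] at hz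
      exact F2 a b c d hd0 hb ha (-(↑j : ZMod (2^a))) hd2 hbd hcd hz
    have hordβq : orderOf (q β) = 2^b := by
      have h1 : orderOf (q β) ∣ 2^b := orderOf_dvd_of_pow_eq_one hdvdb
      obtain ⟨t, ht, hord⟩ := (Nat.dvd_prime_pow Nat.prime_two).mp h1
      have hta : t = b := by
        by_contra hne'
        exact hne (orderOf_dvd_iff_pow_eq_one.mp (by rw [hord]; exact pow_dvd_pow 2 (by omega)))
      rw [hord, hta]
    have htopeq : Subgroup.zpowers (q β) = ⊤ := by
      rw [Subgroup.eq_top_iff']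
      exact htop
    refine ⟨⟨⟨q β, htop⟩⟩, ?_⟩
    calc Nat.card (H ⧸ A) = Nat.card (⊤ : Subgroup (H ⧸ A)) := Subgroup.card_top.symm
      _ = Nat.card (Subgroup.zpowers (q β)) := by rw [htopeq]
      _ = orderOf (q β) := Nat.card_zpowers _
      _ = 2^b := hordβq
  refine ⟨hNormal, hcardA, hquot, ?_⟩
  -- nonsplit
  rintro ⟨K, hK⟩
  haveI := hNormal
  have hcardQ : Nat.card (H ⧸ A) = 2^b := (hquot hNormal).2
  have hbij : Function.Bijective (fun k : K => ((k : H) : H ⧸ A)) := by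
    constructor
    · intro k1 k2 h12
      have hmemA : ((k1 : H))⁻¹ * (k2 : H) ∈ A := QuotientGroup.eq.mp h12
      have hmemK : ((k1 : H))⁻¹ * (k2 : H) ∈ K := mul_mem (inv_mem k1.2) k2.2
      have h1 : ((k1 : H))⁻¹ * (k2 : H) = 1 :=
        Subgroup.disjoint_def.mp hK.disjoint hmemA hmemK
      have := inv_mul_eq_one.mp h1
      exact Subtype.ext this
    · intro x
      refine QuotientGroup.induction_on x ?_
      intro h
      obtain ⟨⟨⟨a1, ha1⟩, ⟨k1, hk1⟩⟩, hak, -⟩ := hK.existsUnique h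
      refine ⟨⟨k1, hk1⟩, ?_⟩
      show ((k1 : H) : H ⧸ A) = ((h : H) : H ⧸ A)
      rw [← hak]
      show _ = ((a1 * k1 : H) : H ⧸ A)
      rw [QuotientGroup.mk_mul]
      have h1 : ((a1 : H) : H ⧸ A) = 1 := (QuotientGroup.eq_one_iff _).mpr ha1
      rw [h1, one_mul]
  have hcardK : Nat.card K = 2^b := by
    rw [Nat.card_congr (Equiv.ofBijective _ hbij), hcardQ]
  haveI : Finite K := Nat.finite_of_card_ne_zero (by rw [hcardK]; positivity)
  obtain ⟨⟨⟨a1, ha1⟩, ⟨k1, hk1⟩⟩, hak, -⟩ := hK.existsUnique β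
  obtain ⟨s, hs⟩ := Subgroup.mem_zpowers_iff.mp ha1
  have hk1eq : k1 = α^(-s) * β := by
    rw [← hak]
    show k1 = α^(-s) * ((a1 : H) * k1)
    rw [← hs]
    group
  have hk1pow : k1 ^ (2^b) = 1 := by
    have h1 : (⟨k1, hk1⟩ : K) ^ Nat.card K = 1 := pow_card_eq_one'
    rw [hcardK] at h1
    have := congrArg (fun z : K => (z : H)) h1
    simpa using this
  have hPik : Pi (α^(-s) * β) ^ (2^b) = 1 := by
    rw [← hk1eq, ← map_pow, hk1pow, map_one]
  rw [map_mul, map_zpow, Piα, Piβ, ← map_zpow, pair_x0_zpow, mul_one, ← map_mul,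
    pair_x0_mul_0k] at hPik
  have hone : (1 : ZMod (2^(a+b))) = ((1:ℕ) : ZMod (2^(a+b))) := by push_cast; ring
  rw [hone, ← map_pow, pair_m_one_pow] at hPik
  have hmemZ := (QuotientGroup.eq_one_iff _).mp hPik
  have hF3 := F3 a b c d hd0 hca hmemZ hd2 hbd hcd
  obtain ⟨s', -, hSig⟩ := geom_sum_two_pow d b hd2
  rw [hSig] at hF3
  have hzer : (((-s) * (2^b * s') + 2^c : ℤ) : ZMod (2^a)) = 0 := by
    push_cast
    push_cast at hF3
    linear_combination hF3
  have hdvd : (2:ℤ)^a ∣ (-s) * (2^b * s') + 2^c := by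
    have := (ZMod.intCast_zmod_eq_zero_iff_dvd _ (2^a)).mp hzer
    exact_mod_cast this
  have h1 : (2:ℤ)^(c+1) ∣ 2^a := pow_dvd_pow 2 (by omega)
  have h2 : (2:ℤ)^(c+1) ∣ s * (2^b * s') := by
    refine Dvd.dvd.mul_left ?_ s
    exact Dvd.dvd.mul_right (pow_dvd_pow (2:ℤ) (show c+1 ≤ b by omega)) (s' : ℤ)
  have h3 : (2:ℤ)^(c+1) ∣ 2^c := by
    have heq : (2:ℤ)^c = ((-s)*(2^b*s') + 2^c) + s*(2^b*s') := by ring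
    rw [heq]
    exact dvd_add (h1.trans hdvd) h2
  have h4 : (2:ℤ)^(c+1) ≤ 2^c := Int.le_of_dvd (by positivity) h3
  have h5 : (2:ℤ)^c < 2^(c+1) := by
    have hpos : (0:ℤ) < 2^c := by positivity
    calc (2:ℤ)^c < 2^c + 2^c := by linarith
      _ = 2^(c+1) := by ring
  exact absurd h4 (not_le.mpr h5)
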